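/- Let $n$ be a squarefree positive integer with exactly $l$ distinct prime factors, $l \geq 1$. Then for every integer $j$ with $0 \leq j < l$, $\sum_{d \mid n} \mu(d) (\log d)^{j} = 0$. -/

import Mathlib

open ArithmeticFunction Finset
open scoped ArithmeticFunction.Moebius

/-- Alternating sums of powers of subset sums vanish when the exponent is
smaller than the cardinality. -/
lemma key_alt (x : ℕ → ℝ) (P : Finset ℕ) :
    ∀ j < P.card, ∑ t ∈ P.powerset, (-1 : ℝ) ^ t.card * (∑ p ∈ t, x p) ^ j = 0 := by
  induction P using Finset.induction_on with
  | empty => intro j hj; simp at hj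
  | insert a s ha ih =>
    intro j hj
    rw [Finset.sum_powerset_insert ha]
    have h2 : ∀ t ∈ s.powerset,
        (-1 : ℝ) ^ (insert a t).card * (∑ p ∈ insert a t, x p) ^ j
          = -((-1) ^ t.card * (x a + ∑ p ∈ t, x p) ^ j) := by
      intro t ht
      have hat : a ∉ t := fun h => ha (Finset.mem_powerset.mp ht h)
      rw [Finset.card_insert_of_notMem hat, Finset.sum_insert hat, pow_succ]
      ring
    rw [Finset.sum_congr rfl h2, Finset.sum_neg_distrib]
    have hjs : j ≤ s.card := by
      rw [Finset.card_insert_of_notMem ha] at hj; omega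
    have expand : ∑ t ∈ s.powerset, (-1 : ℝ) ^ t.card * (x a + ∑ p ∈ t, x p) ^ j
        = ∑ t ∈ s.powerset, (-1 : ℝ) ^ t.card * (∑ p ∈ t, x p) ^ j := by
      have : ∀ t ∈ s.powerset, (-1 : ℝ) ^ t.card * (x a + ∑ p ∈ t, x p) ^ j
          = ∑ k ∈ Finset.range (j + 1),
              x a ^ k * (j.choose k : ℝ) * ((-1 : ℝ) ^ t.card * (∑ p ∈ t, x p) ^ (j - k)) := by
        intro t _
        rw [add_pow]
        rw [Finset.mul_sum]
        exact Finset.sum_congr rfl fun k _ => by ring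
      rw [Finset.sum_congr rfl this, Finset.sum_comm]
      rw [Finset.sum_eq_single_of_mem 0 (Finset.mem_range.mpr (Nat.succ_pos j))]
      · simp
      · intro k hkm hk0
        rw [← Finset.mul_sum]
        have hk1 : 1 ≤ k := Nat.one_le_iff_ne_zero.mpr hk0
        have hkj : k ≤ j := Nat.lt_succ_iff.mp (Finset.mem_range.mp hkm)
        have hjk : j - k < s.card := by omega
        rw [ih (j - k) hjk, mul_zero]
    rw [expand]
    ring


lemma moebius_prod_primes : ∀ (t : Finset ℕ), (∀ p ∈ t, p.Prime) →
    μ (∏ p ∈ t, p) = (-1) ^ t.card := by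
  intro t
  induction t using Finset.induction_on with
  | empty => simp
  | insert a s ha ih =>
    intro ht
    have hap : a.Prime := ht a (Finset.mem_insert_self a s)
    have hcop : a.Coprime (∏ p ∈ s, p) :=
      Nat.Coprime.prod_right fun p hp =>
        (Nat.coprime_primes hap (ht p (Finset.mem_insert_of_mem hp))).mpr
          (fun h => ha (h ▸ hp))
    rw [Finset.prod_insert ha, isMultiplicative_moebius.map_mul_of_coprime hcop,
      moebius_apply_prime hap, ih (fun p hp => ht p (Finset.mem_insert_of_mem hp)),
      Finset.card_insert_of_notMem ha, pow_succ]
    ring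

lemma log_prod_primes (t : Finset ℕ) (ht : ∀ p ∈ t, p.Prime) :
    Real.log ((∏ p ∈ t, p : ℕ) : ℝ) = ∑ p ∈ t, Real.log p := by
  push_cast
  rw [Real.log_prod fun p hp => by exact_mod_cast (ht p hp).pos.ne']

theorem stmt_7 (n l : ℕ) (hn : 0 < n) (hsq : Squarefree n)
    (hl : n.primeFactors.card = l) (hl1 : 1 ≤ l) (j : ℕ) (hj : j < l) :
    ∑ d ∈ n.divisors, (μ d : ℝ) * (Real.log d) ^ j = 0 := by
  subst hl
  rw [← Nat.divisors_filter_squarefree_of_squarefree hsq,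
    Nat.sum_divisors_filter_squarefree hn.ne', Nat.factors_eq,
    (show (↑n.primeFactorsList : Multiset ℕ).toFinset = n.primeFactors from rfl)]
  have hstep : ∀ t ∈ n.primeFactors.powerset,
      (μ (t.val.prod) : ℝ) * Real.log (t.val.prod) ^ j
        = (-1 : ℝ) ^ t.card * (∑ p ∈ t, Real.log p) ^ j := by
    intro t ht
    have htP : ∀ p ∈ t, p.Prime := fun p hp =>
      Nat.prime_of_mem_primeFactors
        ((Finset.mem_powerset.mp ht) hp)
    rw [t.prod_val, Function.id_def]
    have h1 : (∏ p ∈ t, p) = ∏ p ∈ t, p := rfl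
    rw [moebius_prod_primes t htP, log_prod_primes t htP]
    push_cast
    ring
  rw [Finset.sum_congr rfl hstep]
  simpa using key_alt (fun p : ℕ => Real.log p) n.primeFactors j hj
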